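/- arXiv:0904.0811 — 3 statements merged into one kernel-verified Lean document; each statement's English description precedes it below -/
import Mathlib

section
/- The set of relative weights of degree-2 polynomials over 𝔽_2 (over all numbers of variables) is infinite. -/
open Finset

def G (k : ℕ) (y : Fin k → ZMod 2 × ZMod 2) : ZMod 2 :=
  ∑ i, (y i).1 * (y i).2

noncomputable def O (k : ℕ) : ℕ :=
  (univ.filter (fun y : Fin k → ZMod 2 × ZMod 2 => G k y ≠ 0)).card

lemma O_le (k : ℕ) : O k ≤ 4 ^ k := by
  have := Finset.card_filter_le (univ : Finset (Fin k → ZMod 2 × ZMod 2))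
      (fun y => G k y ≠ 0)
  simpa [O, Finset.card_univ] using this

lemma card_zero (k : ℕ) :
    (univ.filter (fun y : Fin k → ZMod 2 × ZMod 2 => G k y = 0)).card = 4 ^ k - O k := by
  classical
  have h := Finset.card_filter_add_card_filter_not
      (s := (univ : Finset (Fin k → ZMod 2 × ZMod 2))) (p := fun y => G k y ≠ 0)
  simp only [not_not, Finset.card_univ] at h
  have hcard : Fintype.card (Fin k → ZMod 2 × ZMod 2) = 4 ^ k := by
    simp [Fintype.card_fun]
  rw [hcard] at h
  unfold O
  omega

lemma O_succ (k : ℕ) : O (k + 1) = 3 * O k + (4 ^ k - O k) := by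
  classical
  have hc : ∀ (a : ZMod 2 × ZMod 2) (z : Fin k → ZMod 2 × ZMod 2),
      G (k + 1) (Fin.cons a z) = a.1 * a.2 + G k z := by
    intro a z
    simp [G, Fin.sum_univ_succ]
  have key : O (k + 1) =
      ∑ a : ZMod 2 × ZMod 2,
        (univ.filter (fun z : Fin k → ZMod 2 × ZMod 2 => a.1 * a.2 + G k z ≠ 0)).card := by
    unfold O
    rw [Finset.card_filter]
    rw [← Equiv.sum_comp (Fin.consEquiv (fun _ : Fin (k+1) => ZMod 2 × ZMod 2))
      (fun y => if G (k+1) y ≠ 0 then 1 else 0)]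
    rw [Fintype.sum_prod_type]
    refine Finset.sum_congr rfl fun a _ => ?_
    rw [Finset.card_filter]
    refine Finset.sum_congr rfl fun z _ => ?_
    simp [Fin.consEquiv, hc]
  have huniv : (univ : Finset (ZMod 2 × ZMod 2)) =
      {(0,0), (0,1), (1,0), (1,1)} := by decide
  rw [key, huniv]
  rw [Finset.sum_insert (by decide), Finset.sum_insert (by decide),
    Finset.sum_insert (by decide), Finset.sum_singleton]
  have h00 : ((0:ZMod 2) * 0 : ZMod 2) = 0 := by decide
  have h11 : ∀ s : ZMod 2, ((1:ZMod 2) + s = 0) ↔ ¬ s = 0 := by decide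
  have e1 : (univ.filter (fun z : Fin k → ZMod 2 × ZMod 2 =>
      (0:ZMod 2) * 0 + G k z ≠ 0)).card = O k := by
    unfold O; congr 1; apply Finset.filter_congr; intro z _; simp
  have e2 : (univ.filter (fun z : Fin k → ZMod 2 × ZMod 2 =>
      (0:ZMod 2) * 1 + G k z ≠ 0)).card = O k := by
    unfold O; congr 1; apply Finset.filter_congr; intro z _; simp
  have e3 : (univ.filter (fun z : Fin k → ZMod 2 × ZMod 2 =>
      (1:ZMod 2) * 0 + G k z ≠ 0)).card = O k := by
    unfold O; congr 1; apply Finset.filter_congr; intro z _; simp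
  have e4 : (univ.filter (fun z : Fin k → ZMod 2 × ZMod 2 =>
      (1:ZMod 2) * 1 + G k z ≠ 0)).card = 4 ^ k - O k := by
    rw [← card_zero k]; congr 1; apply Finset.filter_congr; intro z _
    simp [h11]
  rw [e1, e2, e3, e4]
  ring_nf

lemma two_O (k : ℕ) : 2 * O k = 4 ^ k - 2 ^ k := by
  induction k with
  | zero =>
    have : O 0 = 0 := by
      unfold O G
      simp
    simp [this]
  | succ k ih =>
    have hle := O_le k
    have h2 : (2:ℕ) ^ k ≤ 4 ^ k := Nat.pow_le_pow_left (by norm_num) k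
    rw [O_succ k]
    ring_nf
    ring_nf at ih
    omega

open MvPolynomial in
noncomputable def F (k : ℕ) : MvPolynomial (Fin (2 * k)) (ZMod 2) :=
  ∑ i : Fin k, X (⟨2 * i.val, by omega⟩ : Fin (2 * k)) * X (⟨2 * i.val + 1, by omega⟩ : Fin (2 * k))

lemma F_totalDegree (k : ℕ) : (F k).totalDegree ≤ 2 := by
  refine (MvPolynomial.totalDegree_finset_sum _ _).trans (Finset.sup_le fun i _ => ?_)
  refine (MvPolynomial.totalDegree_mul _ _).trans ?_
  simp [MvPolynomial.totalDegree_X]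

lemma eval_F (k : ℕ) (x : Fin (2 * k) → ZMod 2) :
    MvPolynomial.eval x (F k) =
      ∑ i : Fin k, x ⟨2 * i.val, by omega⟩ * x ⟨2 * i.val + 1, by omega⟩ := by
  simp [F]

lemma card_F (k : ℕ) :
    (Finset.univ.filter
      (fun x : Fin (2 * k) → ZMod 2 => MvPolynomial.eval x (F k) ≠ 0)).card = O k := by
  classical
  unfold O
  refine Finset.card_nbij'
    (fun x => fun i : Fin k => (x ⟨2 * i.val, by omega⟩, x ⟨2 * i.val + 1, by omega⟩))
    (fun y => fun j : Fin (2 * k) =>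
      if j.val % 2 = 0 then (y ⟨j.val / 2, by omega⟩).1 else (y ⟨j.val / 2, by omega⟩).2)
    ?_ ?_ ?_ ?_
  · intro x hx
    simp only [Finset.mem_coe, Finset.mem_filter, Finset.mem_univ, true_and] at hx ⊢
    rw [eval_F] at hx
    simpa [G] using hx
  · intro y hy
    simp only [Finset.mem_coe, Finset.mem_filter, Finset.mem_univ, true_and] at hy ⊢
    rw [eval_F]
    have hsum : (∑ i : Fin k,
        (fun j : Fin (2 * k) =>
          if j.val % 2 = 0 then (y ⟨j.val / 2, by omega⟩).1 else (y ⟨j.val / 2, by omega⟩).2)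
          ⟨2 * i.val, by omega⟩ *
        (fun j : Fin (2 * k) =>
          if j.val % 2 = 0 then (y ⟨j.val / 2, by omega⟩).1 else (y ⟨j.val / 2, by omega⟩).2)
          ⟨2 * i.val + 1, by omega⟩) = G k y := by
      unfold G
      refine Finset.sum_congr rfl fun i _ => ?_
      simp only [Fin.val_mk]
      have h0 : (2 * i.val) % 2 = 0 := by omega
      have h1 : ¬ ((2 * i.val + 1) % 2 = 0) := by omega
      rw [if_pos h0, if_neg h1]
      have e0 : (⟨2 * i.val / 2, by omega⟩ : Fin k) = i := by
        apply Fin.ext; simp only [Fin.val_mk]; omega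
      have e1 : (⟨(2 * i.val + 1) / 2, by omega⟩ : Fin k) = i := by
        apply Fin.ext; simp only [Fin.val_mk]; omega
      rw [e0, e1]
    rw [hsum]
    exact hy
  · intro x _
    funext j
    by_cases h : j.val % 2 = 0
    · simp only [h, if_pos]
      congr 1
      apply Fin.ext
      simp only [Fin.val_mk]
      omega
    · simp only [h, if_neg, if_false]
      congr 1
      apply Fin.ext
      simp only [Fin.val_mk]
      omega
  · intro y _
    funext i
    have h0 : (2 * i.val) % 2 = 0 := by omega
    have h1 : ¬ ((2 * i.val + 1) % 2 = 0) := by omega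
    refine Prod.ext ?_ ?_
    · simp only [Fin.val_mk, h0, if_pos]
      congr 2
      apply Fin.ext
      simp only [Fin.val_mk]
      omega
    · simp only [Fin.val_mk, h1, if_neg, if_false]
      congr 2
      apply Fin.ext
      simp only [Fin.val_mk]
      omega

lemma key (k : ℕ) : (O k : ℝ) / (2:ℝ) ^ (2 * k) = 1/2 - (1/2:ℝ) ^ (k + 1) := by
  have h2 : (2:ℕ) ^ k ≤ 4 ^ k := Nat.pow_le_pow_left (by norm_num) k
  have hc : 2 * (O k : ℝ) = 4 ^ k - 2 ^ k := by
    have h := congrArg (Nat.cast : ℕ → ℝ) (two_O k)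
    rw [Nat.cast_sub h2] at h
    push_cast at h
    linarith
  have h24 : (4:ℝ) ^ k = 2 ^ k * 2 ^ k := by
    rw [show (4:ℝ) = 2 * 2 by norm_num, mul_pow]
  have hpow : (2:ℝ) ^ (2 * k) = 2 ^ k * 2 ^ k := by rw [two_mul, pow_add]
  have hk0 : (0:ℝ) < 2 ^ k := by positivity
  have hhalf : ((1:ℝ)/2) ^ (k+1) = 1 / (2 * 2 ^ k) := by
    rw [div_pow, one_pow, pow_succ]; ring_nf
  rw [div_eq_iff (by positivity : ((2:ℝ) ^ (2*k)) ≠ 0), hpow, hhalf]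
  rw [h24] at hc
  field_simp
  nlinarith [hc, hk0]

/-- `W₂(2)`, the set of relative weights of degree-≤2 polynomials over `𝔽₂`
(over all numbers of variables), is infinite. -/
theorem stmt2 :
    Set.Infinite {w : ℝ | ∃ (m : ℕ) (f : MvPolynomial (Fin m) (ZMod 2)),
      f.totalDegree ≤ 2 ∧
      w = ((Finset.univ.filter
        (fun x : Fin m → ZMod 2 => MvPolynomial.eval x f ≠ 0)).card : ℝ) / (2 : ℝ) ^ m} := by
  apply Set.infinite_of_injective_forall_mem
    (f := fun k : ℕ => (O k : ℝ) / (2:ℝ) ^ (2 * k))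
  · intro a b hab
    simp only [key] at hab
    have hmono : StrictMono fun k : ℕ => 1/2 - (1/2:ℝ) ^ (k + 1) := by
      intro a b h
      simp only
      have : (1/2:ℝ) ^ (b+1) < (1/2:ℝ) ^ (a+1) :=
        pow_lt_pow_right_of_lt_one₀ (by norm_num) (by norm_num) (by omega)
      linarith
    exact hmono.injective hab
  · intro k
    exact ⟨2 * k, F k, F_totalDegree k, by rw [card_F]⟩
end

section
/- If a distribution D on 𝔽_p^c satisfies: for every nonzero a = (a_1,…,a_c) ∈ 𝔽_p^c, the distribution of a_1 y_1 + ⋯ + a_c y_c (where y ∼ D) is within statistical distance p^{-c}·ε of the uniform distribution on 𝔽_p, then D itself is within statistical distance ε of the uniform distribution on 𝔽_p^c. -/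
open Finset

lemma fiber_card {p : ℕ} [hp : Fact p.Prime] {c : ℕ} (z : Fin c → ZMod p) (hz : z ≠ 0)
    (t : ZMod p) :
    (Finset.univ.filter (fun y : Fin c → ZMod p => ∑ i, z i * y i = t)).card = p ^ (c - 1) := by
  obtain ⟨i, hi⟩ : ∃ i, z i ≠ 0 := by
    by_contra h; push_neg at h; exact hz (funext h)
  set w : Fin c → ZMod p := fun j => if j = i then (z i)⁻¹ else 0 with hw
  have hzw : ∑ j, z j * w j = 1 := by
    rw [Finset.sum_eq_single i]
    · simp [hw, mul_inv_cancel₀ hi]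
    · intro j _ hj; simp [hw, hj]
    · simp
  have hsw : ∀ s : ZMod p, ∑ j, z j * (s * w j) = s := by
    intro s
    simp_rw [mul_left_comm _ s]
    rw [← Finset.mul_sum, hzw, mul_one]
  have key : ∀ s : ZMod p,
      (univ.filter (fun y : Fin c → ZMod p => ∑ i, z i * y i = s)).card
      = (univ.filter (fun y : Fin c → ZMod p => ∑ i, z i * y i = 0)).card := by
    intro s
    apply Finset.card_bij' (fun y _ => y - s • w) (fun y _ => y + s • w)
    · intro y hy
      simp only [mem_filter, mem_univ, true_and] at hy ⊢
      simp only [Pi.sub_apply, Pi.smul_apply, smul_eq_mul, mul_sub]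
      rw [Finset.sum_sub_distrib, hy, hsw, sub_self]
    · intro y hy
      simp only [mem_filter, mem_univ, true_and] at hy ⊢
      simp only [Pi.add_apply, Pi.smul_apply, smul_eq_mul, mul_add]
      rw [Finset.sum_add_distrib, hy, hsw, zero_add]
    · intro y _; funext j; simp
    · intro y _; funext j; simp
  have hc : c ≠ 0 := by rintro rfl; exact i.elim0
  obtain ⟨d, rfl⟩ : ∃ d, c = d + 1 := ⟨c - 1, by omega⟩
  have hpart : (Finset.univ : Finset (Fin (d+1) → ZMod p)).card
      = ∑ s : ZMod p, (univ.filter (fun y : Fin (d+1) → ZMod p => ∑ i, z i * y i = s)).card :=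
    Finset.card_eq_sum_card_fiberwise (fun y _ => Finset.mem_univ _)
  have hcard : (Finset.univ : Finset (Fin (d+1) → ZMod p)).card = p ^ (d+1) := by
    simp [Fintype.card_fun]
  have hsum : p ^ (d+1) = ∑ s : ZMod p,
      (univ.filter (fun y : Fin (d+1) → ZMod p => ∑ i, z i * y i = 0)).card := by
    rw [← hcard, hpart]; exact Finset.sum_congr rfl fun s _ => key s
  rw [Finset.sum_const, Finset.card_univ, ZMod.card, smul_eq_mul] at hsum
  have hpc : p * (univ.filter (fun y : Fin (d+1) → ZMod p => ∑ i, z i * y i = 0)).card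
      = p * p ^ d := by rw [← hsum, pow_succ']
  rw [key t, Nat.add_sub_cancel]
  exact Nat.eq_of_mul_eq_mul_left hp.out.pos hpc

lemma key_identity {p : ℕ} [hp : Fact p.Prime] {c : ℕ} (f : (Fin c → ZMod p) → ℝ)
    (hf : ∑ y, f y = 0) :
    ∑ a ∈ univ.filter (fun a : Fin c → ZMod p => a ≠ 0), ∑ t : ZMod p,
      (∑ y ∈ univ.filter (fun y : Fin c → ZMod p => ∑ i, a i * y i = t), f y) ^ 2
    = ((p:ℝ) ^ c - (p:ℝ) ^ (c - 1)) * ∑ y, (f y) ^ 2 := by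
  have hT : ∀ a : Fin c → ZMod p,
      ∑ t : ZMod p, (∑ y ∈ univ.filter (fun y : Fin c → ZMod p => ∑ i, a i * y i = t), f y) ^ 2
      = ∑ y : Fin c → ZMod p, ∑ y' : Fin c → ZMod p,
          if (∑ i, a i * y' i = ∑ i, a i * y i) then f y * f y' else 0 := by
    intro a
    have h1 : ∀ t : ZMod p,
        (∑ y ∈ univ.filter (fun y : Fin c → ZMod p => ∑ i, a i * y i = t), f y) ^ 2
        = ∑ y ∈ univ.filter (fun y : Fin c → ZMod p => ∑ i, a i * y i = t),
            ∑ y' : Fin c → ZMod p,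
              if (∑ i, a i * y' i = ∑ i, a i * y i) then f y * f y' else 0 := by
      intro t
      rw [sq, Finset.sum_mul_sum]
      refine Finset.sum_congr rfl ?_
      intro y hy
      rw [Finset.mem_filter] at hy
      rw [← Finset.sum_filter]
      refine Finset.sum_congr ?_ (fun _ _ => rfl)
      ext y'
      simp [hy.2]
    rw [Finset.sum_congr rfl fun t _ => h1 t]
    exact Finset.sum_fiberwise _ _ _
  have hT0 :
      (∑ y : Fin c → ZMod p, ∑ y' : Fin c → ZMod p,
        if (∑ i, (0 : Fin c → ZMod p) i * y' i = ∑ i, (0 : Fin c → ZMod p) i * y i)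
        then f y * f y' else 0) = 0 := by
    simp only [Pi.zero_apply, zero_mul, Finset.sum_const_zero, if_true]
    rw [← Finset.sum_mul_sum, hf, zero_mul]
  have hcount : ∀ y y' : Fin c → ZMod p,
      ((univ.filter (fun a : Fin c → ZMod p => ∑ i, a i * y' i = ∑ i, a i * y i)).card : ℝ)
      = if y' = y then (p:ℝ) ^ c else (p:ℝ) ^ (c - 1) := by
    intro y y'
    by_cases h : y' = y
    · subst h
      simp [Fintype.card_fun, ZMod.card]
    · have hz : y' - y ≠ 0 := sub_ne_zero.mpr h
      rw [if_neg h]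
      have : (univ.filter (fun a : Fin c → ZMod p => ∑ i, a i * y' i = ∑ i, a i * y i))
          = (univ.filter (fun a : Fin c → ZMod p => ∑ i, (y' - y) i * a i = 0)) := by
        ext a
        simp only [mem_filter, mem_univ, true_and, Pi.sub_apply, sub_mul]
        rw [Finset.sum_sub_distrib, sub_eq_zero]
        constructor
        · intro hh; rw [Finset.sum_congr rfl fun i _ => mul_comm (y' i) (a i),
            Finset.sum_congr rfl fun i _ => mul_comm (y i) (a i)]; exact hh
        · intro hh
          rw [Finset.sum_congr rfl fun i _ => mul_comm (a i) (y' i),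
            Finset.sum_congr rfl fun i _ => mul_comm (a i) (y i)]
          exact hh
      rw [this, fiber_card (y' - y) hz 0, Nat.cast_pow]
  -- assemble
  have hsplit : ∑ a ∈ univ.filter (fun a : Fin c → ZMod p => a ≠ 0), ∑ t : ZMod p,
      (∑ y ∈ univ.filter (fun y : Fin c → ZMod p => ∑ i, a i * y i = t), f y) ^ 2
      = ∑ a : Fin c → ZMod p, ∑ y : Fin c → ZMod p, ∑ y' : Fin c → ZMod p,
          if (∑ i, a i * y' i = ∑ i, a i * y i) then f y * f y' else 0 := by
    rw [Finset.filter_ne', Finset.sum_congr rfl fun a _ => hT a]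
    rw [← Finset.sum_erase_add _ _ (Finset.mem_univ (0 : Fin c → ZMod p)), hT0, add_zero]
  rw [hsplit]
  rw [Finset.sum_comm]
  have hswap : ∀ y : Fin c → ZMod p,
      (∑ a : Fin c → ZMod p, ∑ y' : Fin c → ZMod p,
        if (∑ i, a i * y' i = ∑ i, a i * y i) then f y * f y' else 0)
      = ∑ y' : Fin c → ZMod p, f y * f y' *
          (if y' = y then (p:ℝ) ^ c else (p:ℝ) ^ (c - 1)) := by
    intro y
    rw [Finset.sum_comm]
    refine Finset.sum_congr rfl ?_
    intro y' _
    rw [← hcount y y', ← Finset.sum_filter, Finset.sum_const, nsmul_eq_mul, mul_comm]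
  rw [Finset.sum_congr rfl fun y _ => hswap y]
  have hrw : ∀ y y' : Fin c → ZMod p,
      f y * f y' * (if y' = y then (p:ℝ) ^ c else (p:ℝ) ^ (c - 1))
      = f y * f y' * (p:ℝ) ^ (c - 1)
        + (if y' = y then f y * f y' * ((p:ℝ) ^ c - (p:ℝ) ^ (c - 1)) else 0) := by
    intro y y'
    by_cases h : y' = y <;> simp [h] <;> ring
  rw [Finset.sum_congr rfl fun y _ => by
      rw [Finset.sum_congr rfl fun y' _ => hrw y y', Finset.sum_add_distrib],
    Finset.sum_add_distrib]
  have e1 : ∑ y : Fin c → ZMod p, ∑ y' : Fin c → ZMod p, f y * f y' * (p:ℝ) ^ (c - 1) = 0 := by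
    have h0 : ∀ y : Fin c → ZMod p,
        (∑ y' : Fin c → ZMod p, f y * f y' * (p:ℝ) ^ (c - 1)) = 0 := by
      intro y
      rw [← Finset.sum_mul, ← Finset.mul_sum, hf, mul_zero, zero_mul]
    rw [Finset.sum_congr rfl fun y _ => h0 y, Finset.sum_const, smul_zero]
  have e2 : ∑ y : Fin c → ZMod p, (∑ y' : Fin c → ZMod p,
      if y' = y then f y * f y' * ((p:ℝ) ^ c - (p:ℝ) ^ (c - 1)) else 0)
      = ((p:ℝ) ^ c - (p:ℝ) ^ (c - 1)) * ∑ y, (f y) ^ 2 := by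
    simp_rw [Finset.sum_ite_eq' univ]
    simp only [mem_univ, if_true]
    rw [Finset.mul_sum]
    exact Finset.sum_congr rfl fun y _ => by ring
  rw [e1, e2, zero_add]

/-- Vazirani-type XOR lemma over `𝔽_p`: if for every nonzero `a ∈ 𝔽_p^c` the distribution of
`a·y` (`y ∼ D`) is within statistical distance `p^{-c}·ε` of uniform on `𝔽_p`, then `D` is
within statistical distance `ε` of uniform on `𝔽_p^c`. -/
theorem stmt6 (p : ℕ) (hp : p.Prime) [NeZero p] (c : ℕ) (ε : ℝ) (hε : 0 < ε)
    (D : (Fin c → ZMod p) → ℝ)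
    (hpos : ∀ y, 0 ≤ D y) (hsum : ∑ y, D y = 1)
    (hlin : ∀ a : Fin c → ZMod p, a ≠ 0 →
      (1 / 2) * ∑ t : ZMod p,
        |(∑ y ∈ Finset.univ.filter (fun y : Fin c → ZMod p => ∑ i, a i * y i = t), D y)
          - 1 / (p : ℝ)| ≤ ε / (p : ℝ) ^ c) :
    (1 / 2) * ∑ y : Fin c → ZMod p, |D y - 1 / (p : ℝ) ^ c| ≤ ε := by
  have hpfact : Fact p.Prime := ⟨hp⟩
  have hp2 : (2:ℝ) ≤ (p:ℝ) := by exact_mod_cast hp.two_le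
  have hppos : (0:ℝ) < (p:ℝ) := by linarith
  rcases Nat.eq_zero_or_pos c with hc0 | hcpos
  · subst hc0
    rw [Fintype.sum_unique] at hsum
    rw [Fintype.sum_unique, pow_zero, hsum]
    simp
    linarith
  -- main case
  set f : (Fin c → ZMod p) → ℝ := fun y => D y - 1 / (p:ℝ) ^ c with hfdef
  have hcard : (Fintype.card (Fin c → ZMod p)) = p ^ c := by
    simp [Fintype.card_fun]
  have hpc_pos : (0:ℝ) < (p:ℝ) ^ c := by positivity
  have hf : ∑ y, f y = 0 := by
    rw [Finset.sum_sub_distrib, hsum, Finset.sum_const, Finset.card_univ, hcard,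
      nsmul_eq_mul]
    push_cast
    field_simp
    norm_num
  have hQP : (p:ℝ) ^ (c - 1) * (p:ℝ) = (p:ℝ) ^ c := by
    rw [← pow_succ]
    congr 1
    omega
  -- fiber sums of f
  have hg : ∀ a : Fin c → ZMod p, a ≠ 0 → ∀ t : ZMod p,
      (∑ y ∈ univ.filter (fun y : Fin c → ZMod p => ∑ i, a i * y i = t), f y)
      = (∑ y ∈ univ.filter (fun y : Fin c → ZMod p => ∑ i, a i * y i = t), D y)
        - 1 / (p:ℝ) := by
    intro a ha t
    rw [Finset.sum_sub_distrib, Finset.sum_const, fiber_card a ha t, nsmul_eq_mul]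
    congr 1
    push_cast
    field_simp
    linear_combination hQP
  -- per-a bound
  have hperA : ∀ a : Fin c → ZMod p, a ≠ 0 →
      (∑ t : ZMod p,
        (∑ y ∈ univ.filter (fun y : Fin c → ZMod p => ∑ i, a i * y i = t), f y) ^ 2)
      ≤ 4 * ε ^ 2 / ((p:ℝ) ^ c) ^ 2 := by
    intro a ha
    have h1 : ∑ t : ZMod p,
        |(∑ y ∈ univ.filter (fun y : Fin c → ZMod p => ∑ i, a i * y i = t), f y)|
        ≤ 2 * ε / (p:ℝ) ^ c := by
      have := hlin a ha
      have h2 : ∑ t : ZMod p,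
          |(∑ y ∈ univ.filter (fun y : Fin c → ZMod p => ∑ i, a i * y i = t), f y)|
          = ∑ t : ZMod p,
          |(∑ y ∈ univ.filter (fun y : Fin c → ZMod p => ∑ i, a i * y i = t), D y)
            - 1 / (p:ℝ)| :=
        Finset.sum_congr rfl fun t _ => by rw [hg a ha t]
      rw [h2]
      have hma : 2 * ε / (p:ℝ) ^ c = 2 * (ε / (p:ℝ) ^ c) := by ring
      rw [hma]
      linarith [hlin a ha]
    calc ∑ t : ZMod p,
        (∑ y ∈ univ.filter (fun y : Fin c → ZMod p => ∑ i, a i * y i = t), f y) ^ 2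
        = ∑ t : ZMod p,
          |(∑ y ∈ univ.filter (fun y : Fin c → ZMod p => ∑ i, a i * y i = t), f y)| ^ 2 :=
          Finset.sum_congr rfl fun t _ => (sq_abs _).symm
      _ ≤ (∑ t : ZMod p,
          |(∑ y ∈ univ.filter (fun y : Fin c → ZMod p => ∑ i, a i * y i = t), f y)|) ^ 2 :=
          Finset.sum_sq_le_sq_sum_of_nonneg (fun t _ => abs_nonneg _)
      _ ≤ (2 * ε / (p:ℝ) ^ c) ^ 2 := by
          have hnn : 0 ≤ ∑ t : ZMod p,
              |(∑ y ∈ univ.filter (fun y : Fin c → ZMod p => ∑ i, a i * y i = t), f y)| :=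
            Finset.sum_nonneg fun t _ => abs_nonneg _
          exact pow_le_pow_left₀ hnn h1 2
      _ = 4 * ε ^ 2 / ((p:ℝ) ^ c) ^ 2 := by ring
  -- sum over a
  have hA : ((p:ℝ) ^ c - (p:ℝ) ^ (c - 1)) * ∑ y, (f y) ^ 2
      ≤ (p:ℝ) ^ c * (4 * ε ^ 2 / ((p:ℝ) ^ c) ^ 2) := by
    rw [← key_identity f hf]
    calc ∑ a ∈ univ.filter (fun a : Fin c → ZMod p => a ≠ 0), ∑ t : ZMod p,
        (∑ y ∈ univ.filter (fun y : Fin c → ZMod p => ∑ i, a i * y i = t), f y) ^ 2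
        ≤ (univ.filter (fun a : Fin c → ZMod p => a ≠ 0)).card
            • (4 * ε ^ 2 / ((p:ℝ) ^ c) ^ 2) :=
          Finset.sum_le_card_nsmul _ _ _ (fun a ha => by
            rw [Finset.mem_filter] at ha
            exact hperA a ha.2)
      _ ≤ (p:ℝ) ^ c * (4 * ε ^ 2 / ((p:ℝ) ^ c) ^ 2) := by
          rw [nsmul_eq_mul]
          have hcle : ((univ.filter (fun a : Fin c → ZMod p => a ≠ 0)).card : ℝ)
              ≤ (p:ℝ) ^ c := by
            have := Finset.card_filter_le (univ : Finset (Fin c → ZMod p))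
              (fun a => a ≠ 0)
            have h3 : ((univ.filter (fun a : Fin c → ZMod p => a ≠ 0)).card : ℝ)
                ≤ ((univ : Finset (Fin c → ZMod p)).card : ℝ) := by exact_mod_cast this
            rwa [Finset.card_univ, hcard, Nat.cast_pow] at h3
          have hrhs : (0:ℝ) ≤ 4 * ε ^ 2 / ((p:ℝ) ^ c) ^ 2 := by positivity
          exact mul_le_mul_of_nonneg_right hcle hrhs
  -- Cauchy-Schwarz
  have hB : (∑ y, |f y|) ^ 2 ≤ (p:ℝ) ^ c * ∑ y, (f y) ^ 2 := by
    have := Finset.sum_mul_sq_le_sq_mul_sq univ (fun _ : Fin c → ZMod p => (1:ℝ))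
      (fun y => |f y|)
    simp only [one_mul, one_pow] at this
    rw [Finset.sum_const, Finset.card_univ, hcard, nsmul_eq_mul, mul_one] at this
    calc (∑ y, |f y|) ^ 2 ≤ ((p ^ c : ℕ) : ℝ) * ∑ y, |f y| ^ 2 := this
      _ = (p:ℝ) ^ c * ∑ y, (f y) ^ 2 := by
          push_cast
          congr 1
          exact Finset.sum_congr rfl fun y _ => sq_abs _
  -- combine
  have hM : (1:ℝ) ≤ (p:ℝ) ^ c - (p:ℝ) ^ (c - 1) := by
    have hQ1 : (1:ℝ) ≤ (p:ℝ) ^ (c - 1) := one_le_pow₀ (by linarith)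
    nlinarith [hQ1, hQP]
  have hS_nonneg : (0:ℝ) ≤ ∑ y, |f y| := Finset.sum_nonneg fun y _ => abs_nonneg _
  have hF_nonneg : (0:ℝ) ≤ ∑ y, (f y) ^ 2 := Finset.sum_nonneg fun y _ => sq_nonneg _
  have hnum : (p:ℝ) ^ c * ((p:ℝ) ^ c * (4 * ε ^ 2 / ((p:ℝ) ^ c) ^ 2))
      ≤ 4 * ε ^ 2 * ((p:ℝ) ^ c - (p:ℝ) ^ (c - 1)) := by
    have h4 : (p:ℝ) ^ c * ((p:ℝ) ^ c * (4 * ε ^ 2 / ((p:ℝ) ^ c) ^ 2)) = 4 * ε ^ 2 := by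
      field_simp
    rw [h4]
    nlinarith [hM, sq_nonneg ε, hε]
  have hsq : (∑ y, |f y|) ^ 2 ≤ (2 * ε) ^ 2 := by
    have hMpos : (0:ℝ) < (p:ℝ) ^ c - (p:ℝ) ^ (c - 1) := by linarith
    have step : ((p:ℝ) ^ c - (p:ℝ) ^ (c - 1)) * (∑ y, |f y|) ^ 2
        ≤ ((p:ℝ) ^ c - (p:ℝ) ^ (c - 1)) * (2 * ε) ^ 2 := by
      calc ((p:ℝ) ^ c - (p:ℝ) ^ (c - 1)) * (∑ y, |f y|) ^ 2
          ≤ ((p:ℝ) ^ c - (p:ℝ) ^ (c - 1)) * ((p:ℝ) ^ c * ∑ y, (f y) ^ 2) :=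
            mul_le_mul_of_nonneg_left hB (le_of_lt hMpos)
        _ = (p:ℝ) ^ c * (((p:ℝ) ^ c - (p:ℝ) ^ (c - 1)) * ∑ y, (f y) ^ 2) := by ring
        _ ≤ (p:ℝ) ^ c * ((p:ℝ) ^ c * (4 * ε ^ 2 / ((p:ℝ) ^ c) ^ 2)) :=
            mul_le_mul_of_nonneg_left hA (le_of_lt hpc_pos)
        _ ≤ 4 * ε ^ 2 * ((p:ℝ) ^ c - (p:ℝ) ^ (c - 1)) := hnum
        _ = ((p:ℝ) ^ c - (p:ℝ) ^ (c - 1)) * (2 * ε) ^ 2 := by ring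
    exact le_of_mul_le_mul_left step hMpos
  have hfin : ∑ y, |f y| ≤ 2 * ε := by nlinarith [hsq, hS_nonneg, hε]
  linarith [hfin]
end

section
/- Suppose that for an arbitrary error function E : ℕ → (0,1) there is a constant C (depending on p, r, E) such that every degree-≤r polynomial f over 𝔽_p has, for some c ≤ C, a function g : 𝔽_p^c → 𝔽_p with |rel-wt(f) − rel-wt(g)| < E(c). Then for every α ∈ [0,1] that is not p-rational, there exists ε > 0 such that no degree-≤r polynomial over 𝔽_p (in any number of variables) has relative weight in (α − ε, α + ε). -/
/-- Relative weight of a function `g : 𝔽_p^c → 𝔽_p`. -/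
noncomputable def relWtF (p c : ℕ) [NeZero p] (g : (Fin c → ZMod p) → ZMod p) : ℝ :=
  ((Finset.univ.filter (fun x => g x ≠ 0)).card : ℝ) / (p : ℝ) ^ c

/-- Relative weight of a polynomial `f` over `𝔽_p` in `m` variables. -/
noncomputable def relWtP (p m : ℕ) [NeZero p] (f : MvPolynomial (Fin m) (ZMod p)) : ℝ :=
  ((Finset.univ.filter
    (fun x : Fin m → ZMod p => MvPolynomial.eval x f ≠ 0)).card : ℝ) / (p : ℝ) ^ m

/-- If for every error function `E : ℕ → (0,1)` there is a constant `C` such that every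
degree-`≤ r` polynomial `f` over `𝔽_p` is approximated, for some `c ≤ C`, by a function
`g : 𝔽_p^c → 𝔽_p` with `|rel-wt(f) − rel-wt(g)| < E(c)`, then around every
non-`p`-rational `α ∈ [0,1]` there is an interval containing no relative weight of a
degree-`≤ r` polynomial. -/
theorem stmt8 (p : ℕ) (hp : p.Prime) [NeZero p] (r : ℕ)
    (happrox : ∀ E : ℕ → ℝ, (∀ c, 0 < E c ∧ E c < 1) →
      ∃ C : ℕ, ∀ (m : ℕ) (f : MvPolynomial (Fin m) (ZMod p)), f.totalDegree ≤ r →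
        ∃ c ≤ C, ∃ g : (Fin c → ZMod p) → ZMod p,
          |relWtP p m f - relWtF p c g| < E c) :
    ∀ α ∈ Set.Icc (0 : ℝ) 1, (¬∃ (ℓ k : ℕ), α = (ℓ : ℝ) / (p : ℝ) ^ k) →
      ∃ ε > 0, ∀ (m : ℕ) (f : MvPolynomial (Fin m) (ZMod p)), f.totalDegree ≤ r →
        relWtP p m f ∉ Set.Ioo (α - ε) (α + ε) := by
  intro α hα hα'
  have hppos : (0:ℝ) < p := by exact_mod_cast hp.pos
  have hpc : ∀ c : ℕ, (0:ℝ) < (p:ℝ)^c := fun c => pow_pos hppos c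
  set δ : ℕ → ℝ := fun c => |α - (round (α * (p:ℝ)^c) : ℝ) / (p:ℝ)^c| with hδdef
  have hkey : ∀ (c : ℕ) (n : ℤ), δ c ≤ |α - (n:ℝ) / (p:ℝ)^c| := by
    intro c n
    have gen : ∀ x : ℝ, |α - x / (p:ℝ)^c| = |α * (p:ℝ)^c - x| / (p:ℝ)^c := by
      intro x
      have hx : α - x / (p:ℝ)^c = (α * (p:ℝ)^c - x) / (p:ℝ)^c := by
        field_simp
      rw [hx, abs_div, abs_of_pos (hpc c)]
    have h1 : δ c = |α * (p:ℝ)^c - (round (α * (p:ℝ)^c) : ℝ)| / (p:ℝ)^c := by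
      rw [hδdef]; exact gen _
    rw [h1, gen]
    exact div_le_div_of_nonneg_right (round_le (α * (p:ℝ)^c) n) (hpc c).le
  have hδpos : ∀ c, 0 < δ c := by
    intro c
    rcases (abs_nonneg (α - (round (α * (p:ℝ)^c) : ℝ) / (p:ℝ)^c)).lt_or_eq with h | h
    · exact h
    · exfalso
      have h0 : α = (round (α * (p:ℝ)^c) : ℝ) / (p:ℝ)^c := by
        have := abs_eq_zero.mp h.symm
        linarith
      set n := round (α * (p:ℝ)^c) with hn
      have hn0 : 0 ≤ n := by
        by_contra hneg
        push_neg at hneg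
        have : (n:ℝ) < 0 := by exact_mod_cast hneg
        have : (n:ℝ) / (p:ℝ)^c < 0 := div_neg_of_neg_of_pos this (hpc c)
        linarith [hα.1, h0]
      exact hα' ⟨n.toNat, c, by rw [h0]; congr 1; exact_mod_cast (Int.toNat_of_nonneg hn0).symm⟩
  set E : ℕ → ℝ := fun c => min (δ c / 2) (1/2) with hEdef
  have hE : ∀ c, 0 < E c ∧ E c < 1 := by
    intro c
    constructor
    · exact lt_min (by linarith [hδpos c]) (by norm_num)
    · exact lt_of_le_of_lt (min_le_right _ _) (by norm_num)
  obtain ⟨C, hC⟩ := happrox E hE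
  refine ⟨(Finset.range (C+1)).inf' ⟨0, Finset.mem_range.mpr (Nat.succ_pos C)⟩ E, ?_, ?_⟩
  · simp only [gt_iff_lt, Finset.lt_inf'_iff]
    exact (Finset.lt_inf'_iff _).2 fun c _ => (hE c).1
  · intro m f hf hmem
    obtain ⟨c, hcC, g, hg⟩ := hC m f hf
    have hεE : (Finset.range (C+1)).inf' ⟨0, Finset.mem_range.mpr (Nat.succ_pos C)⟩ E ≤ E c :=
      Finset.inf'_le _ (Finset.mem_range.mpr (Nat.lt_succ_of_le hcC))
    have h1 : |relWtP p m f - α| < E c := by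
      rw [abs_sub_lt_iff]
      obtain ⟨ha, hb⟩ := hmem
      constructor <;> linarith
    have h2 : δ c ≤ |α - relWtF p c g| := by
      have := hkey c ((Finset.univ.filter (fun x : Fin c → ZMod p => g x ≠ 0)).card : ℤ)
      simpa [relWtF] using this
    have h3 : |α - relWtF p c g| ≤ |α - relWtP p m f| + |relWtP p m f - relWtF p c g| :=
      abs_sub_le _ _ _
    have hEc : E c ≤ δ c / 2 := min_le_left _ _
    rw [abs_sub_comm α (relWtP p m f)] at h3
    linarith [h1, hg, h2, h3, hEc]
end
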